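/- Let m ≥ n ≥ 0 be integers and let 0 ≤ k ≤ m−n. Then in the Laurent polynomial P_m·P_n ∈ ℤ[q,q⁻¹], the coefficient of q^{m−n−2k} equals −(1/3)·n(n+1)(n+2); in particular this coefficient is independent of k. (This is the coefficient computation of §4.4 used to prove the explicit formulas of Theorem 1.3(c).) -/

import Mathlib

/-- The Laurent polynomial `P_r = r·q^r + (r−2)·q^{r−2} + ⋯ + (2−r)·q^{2−r} + (−r)·q^{−r}
= Σ_{j=0}^{r} (r−2j)·q^{r−2j} ∈ ℤ[q,q⁻¹]`. -/
noncomputable def P (r : ℕ) : LaurentPolynomial ℤ :=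
  ∑ j ∈ Finset.range (r + 1),
    LaurentPolynomial.C ((r : ℤ) - 2 * j) * LaurentPolynomial.T ((r : ℤ) - 2 * j)

lemma sum_id_q (n : ℕ) : ∑ j ∈ Finset.range (n + 1), (j : ℚ) = n * (n + 1) / 2 := by
  induction n with
  | zero => simp
  | succ n ih => rw [Finset.sum_range_succ, ih]; push_cast; ring

lemma sum_sq_q (n : ℕ) :
    ∑ j ∈ Finset.range (n + 1), (j : ℚ) ^ 2 = n * (n + 1) * (2 * n + 1) / 6 := by
  induction n with
  | zero => simp
  | succ n ih => rw [Finset.sum_range_succ, ih]; push_cast; ring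

lemma key_sum (A : ℚ) (n : ℕ) :
    ∑ j ∈ Finset.range (n + 1), (A + 2 * j) * ((n : ℚ) - 2 * j) =
      -(1/3) * n * ((n : ℚ) + 1) * ((n : ℚ) + 2) := by
  have h : ∀ j ∈ Finset.range (n + 1),
      (A + 2 * j) * ((n : ℚ) - 2 * j)
        = A * n + (2 * n - 2 * A) * (j : ℚ) - 4 * (j : ℚ) ^ 2 := by
    intro j _; ring
  rw [Finset.sum_congr rfl h]
  simp only [Finset.sum_sub_distrib, Finset.sum_add_distrib, ← Finset.mul_sum,
    Finset.sum_const, Finset.card_range, nsmul_eq_mul, sum_id_q, sum_sq_q]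
  push_cast
  ring

/-- For `m ≥ n ≥ 0` and `0 ≤ k ≤ m−n`, the coefficient of `q^{m−n−2k}` in `P_m·P_n`
equals `−(1/3)·n(n+1)(n+2)`; in particular it is independent of `k`. -/
theorem PmPn_middle_coeffs (m n k : ℕ) (hmn : n ≤ m) (hk : k ≤ m - n) :
    (((P m * P n).coeff ((m : ℤ) - n - 2 * k) : ℤ) : ℚ) =
      -(1/3) * (n : ℚ) * ((n : ℚ) + 1) * ((n : ℚ) + 2) := by
  have hkm : n + k ≤ m := by omega
  have hP : ∀ r : ℕ, P r = ∑ j ∈ Finset.range (r + 1),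
      AddMonoidAlgebra.single ((r : ℤ) - 2 * j) ((r : ℤ) - 2 * j) := by
    intro r
    unfold P
    simp_rw [← LaurentPolynomial.single_eq_C_mul_T]
  have hcoeff : (P m * P n).coeff ((m : ℤ) - n - 2 * k) =
      ∑ j ∈ Finset.range (n + 1),
        ((m : ℤ) - 2 * ((n + k - j : ℕ) : ℤ)) * ((n : ℤ) - 2 * j) := by
    rw [hP m, hP n, Finset.sum_mul_sum]
    simp only [AddMonoidAlgebra.single_mul_single]
    rw [← Finset.sum_product', AddMonoidAlgebra.coeff_sum, Finsupp.finset_sum_apply]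
    simp only [AddMonoidAlgebra.coeff_single, Finsupp.single_apply]
    rw [Finset.sum_product_right]
    refine Finset.sum_congr rfl ?_
    intro j hj
    simp only [Finset.mem_range] at hj
    rw [Finset.sum_eq_single_of_mem (n + k - j)]
    · have : (((n + k - j : ℕ)) : ℤ) = (n : ℤ) + k - j := by omega
      rw [if_pos (by omega)]
    · simp only [Finset.mem_range]; omega
    · intro b _ hb
      rw [if_neg (by omega)]
  rw [hcoeff]
  push_cast
  have h2 : ∀ j ∈ Finset.range (n + 1),
      ((m : ℚ) - 2 * ((n + k - j : ℕ) : ℚ)) * ((n : ℚ) - 2 * j)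
        = (((m : ℚ) - 2 * n - 2 * k) + 2 * j) * ((n : ℚ) - 2 * j) := by
    intro j hj
    simp only [Finset.mem_range] at hj
    have : (((n + k - j : ℕ)) : ℚ) = (n : ℚ) + k - j := by
      have : (((n + k - j : ℕ)) : ℤ) = (n : ℤ) + k - j := by omega
      exact_mod_cast congrArg (Int.cast : ℤ → ℚ) this
    rw [this]; ring
  rw [Finset.sum_congr rfl h2, key_sum]
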